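/- There exists a constant n₁ > 0 such that for every λ ∈ ℂ one has ∫_ℂ |ζ| / ((|ζ|²+1)² |ζ−λ|) dReζ dImζ ≤ n₁, where the integral is with respect to Lebesgue measure on ℂ ≅ ℝ². -/

import Mathlib

open MeasureTheory Set Metric
open scoped ENNReal

noncomputable section

private def Fk : ℝ → ℝ≥0∞ := fun x =>
  (Set.Icc (-1:ℝ) 1).indicator (fun x => ENNReal.ofReal ((Real.sqrt |x|)⁻¹)) x

private lemma Fk_meas : Measurable Fk := by
  apply Measurable.indicator _ measurableSet_Icc
  exact ENNReal.measurable_ofReal.comp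
    ((Real.continuous_sqrt.comp continuous_abs).measurable.inv)

private lemma Fk_fin : ∫⁻ x : ℝ, Fk x < ⊤ := by
  have hg : Measurable (fun x : ℝ => ENNReal.ofReal ((Real.sqrt |x|)⁻¹)) :=
    ENNReal.measurable_ofReal.comp
      ((Real.continuous_sqrt.comp continuous_abs).measurable.inv)
  have hIcc : ∫⁻ x in Set.Icc (0:ℝ) 1, ENNReal.ofReal ((Real.sqrt |x|)⁻¹) < ⊤ := by
    have hInt : IntegrableOn (fun x : ℝ => x ^ (-(1/2) : ℝ)) (Set.Icc (0:ℝ) 1) volume :=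
      (intervalIntegrable_iff_integrableOn_Icc_of_le (by norm_num)).1
        (intervalIntegral.intervalIntegrable_rpow' (by norm_num))
    have hcong : ∀ x ∈ Set.Icc (0:ℝ) 1,
        ENNReal.ofReal ((Real.sqrt |x|)⁻¹) = ENNReal.ofReal (x ^ (-(1/2) : ℝ)) := by
      intro x hx
      rw [abs_of_nonneg hx.1, Real.sqrt_eq_rpow, ← Real.rpow_neg hx.1]
    rw [setLIntegral_congr_fun measurableSet_Icc hcong]
    calc ∫⁻ x in Set.Icc (0:ℝ) 1, ENNReal.ofReal (x ^ (-(1/2) : ℝ))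
        ≤ ∫⁻ x in Set.Icc (0:ℝ) 1, ‖x ^ (-(1/2) : ℝ)‖ₑ :=
          lintegral_mono fun x => Real.ofReal_le_enorm _
      _ < ⊤ := hInt.2
  have hneg : ∫⁻ x in Set.Icc (-1:ℝ) 0, ENNReal.ofReal ((Real.sqrt |x|)⁻¹)
      = ∫⁻ x in Set.Icc (0:ℝ) 1, ENNReal.ofReal ((Real.sqrt |x|)⁻¹) := by
    have hkey : ∀ x : ℝ, (Set.Icc (-1:ℝ) 0).indicator
        (fun x => ENNReal.ofReal ((Real.sqrt |x|)⁻¹)) x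
        = (Set.Icc (0:ℝ) 1).indicator (fun x => ENNReal.ofReal ((Real.sqrt |x|)⁻¹)) (-x) := by
      intro x
      by_cases hx : x ∈ Set.Icc (-1:ℝ) 0
      · rw [Set.indicator_of_mem hx, Set.indicator_of_mem
          (by constructor <;> [linarith [hx.2]; linarith [hx.1]] : -x ∈ Set.Icc (0:ℝ) 1),
          abs_neg]
      · rw [Set.indicator_of_notMem hx, Set.indicator_of_notMem]
        intro h
        exact hx ⟨by linarith [h.2], by linarith [h.1]⟩
    rw [← lintegral_indicator measurableSet_Icc _, ← lintegral_indicator measurableSet_Icc _]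
    calc ∫⁻ x, (Set.Icc (-1:ℝ) 0).indicator (fun x => ENNReal.ofReal ((Real.sqrt |x|)⁻¹)) x
        = ∫⁻ x, (Set.Icc (0:ℝ) 1).indicator
            (fun x => ENNReal.ofReal ((Real.sqrt |x|)⁻¹)) (-x) := by
          simp_rw [hkey]
      _ = ∫⁻ x, (Set.Icc (0:ℝ) 1).indicator
            (fun x => ENNReal.ofReal ((Real.sqrt |x|)⁻¹)) x :=
          (Measure.measurePreserving_neg (volume : Measure ℝ)).lintegral_comp
            (hg.indicator measurableSet_Icc)
  calc ∫⁻ x : ℝ, Fk x = ∫⁻ x in Set.Icc (-1:ℝ) 1, ENNReal.ofReal ((Real.sqrt |x|)⁻¹) := by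
        exact lintegral_indicator measurableSet_Icc _
    _ ≤ ∫⁻ x in Set.Icc (-1:ℝ) 0 ∪ Set.Icc (0:ℝ) 1,
          ENNReal.ofReal ((Real.sqrt |x|)⁻¹) := by
        apply lintegral_mono_set
        intro x hx
        rcases le_total x 0 with h | h
        · exact Or.inl ⟨hx.1, h⟩
        · exact Or.inr ⟨h, hx.2⟩
    _ ≤ (∫⁻ x in Set.Icc (-1:ℝ) 0, ENNReal.ofReal ((Real.sqrt |x|)⁻¹)) +
          ∫⁻ x in Set.Icc (0:ℝ) 1, ENNReal.ofReal ((Real.sqrt |x|)⁻¹) :=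
        lintegral_union_le _ _ _
    _ < ⊤ := by
        rw [hneg]
        exact ENNReal.add_lt_top.2 ⟨hIcc, hIcc⟩

private lemma aux_A :
    ∫⁻ w : ℂ, (Metric.ball (0:ℂ) 1).indicator
      (fun w => (ENNReal.ofReal (‖w‖))⁻¹) w < ⊤ := by
  -- null sets: the two axes
  have hre : volume {w : ℂ | w.re = 0} = 0 := by
    have h1 : {w : ℂ | w.re = 0}
        = Complex.measurableEquivRealProd ⁻¹' ({0} ×ˢ (Set.univ : Set ℝ)) := by
      ext w
      simp [Complex.measurableEquivRealProd_apply, eq_comm]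
    rw [h1, Complex.volume_preserving_equiv_real_prod.measure_preimage
      (((measurableSet_singleton (0:ℝ)).prod MeasurableSet.univ).nullMeasurableSet)]
    rw [Measure.volume_eq_prod, Measure.prod_prod]
    simp
  have him : volume {w : ℂ | w.im = 0} = 0 := by
    have h1 : {w : ℂ | w.im = 0}
        = Complex.measurableEquivRealProd ⁻¹' ((Set.univ : Set ℝ) ×ˢ {0}) := by
      ext w
      simp [Complex.measurableEquivRealProd_apply, eq_comm]
    rw [h1, Complex.volume_preserving_equiv_real_prod.measure_preimage
      ((MeasurableSet.univ.prod (measurableSet_singleton (0:ℝ))).nullMeasurableSet)]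
    rw [Measure.volume_eq_prod, Measure.prod_prod]
    simp
  have h1 : ∀ᵐ w : ℂ, w.re ≠ 0 := by
    rw [MeasureTheory.ae_iff]
    simpa using hre
  have h2 : ∀ᵐ w : ℂ, w.im ≠ 0 := by
    rw [MeasureTheory.ae_iff]
    simpa using him
  have hb : ∀ᵐ w : ℂ, (Metric.ball (0:ℂ) 1).indicator
      (fun w => (ENNReal.ofReal (‖w‖))⁻¹) w ≤ Fk w.re * Fk w.im := by
    filter_upwards [h1, h2] with w hw1 hw2
    by_cases hw : w ∈ Metric.ball (0:ℂ) 1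
    · rw [Set.indicator_of_mem hw]
      have habs : ‖w‖ < 1 := by
        rw [Metric.mem_ball, Complex.dist_eq, sub_zero] at hw
        exact hw
      have hre1 : w.re ∈ Set.Icc (-1:ℝ) 1 :=
        abs_le.1 ((Complex.abs_re_le_norm w).trans habs.le)
      have him1 : w.im ∈ Set.Icc (-1:ℝ) 1 :=
        abs_le.1 ((Complex.abs_im_le_norm w).trans habs.le)
      have hkey : Real.sqrt |w.re| * Real.sqrt |w.im| ≤ ‖w‖ := by
        rw [← Real.sqrt_mul (abs_nonneg _), Complex.norm_def]
        apply Real.sqrt_le_sqrt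
        rw [Complex.normSq_apply]
        nlinarith [sq_nonneg (|w.re| - |w.im|), sq_abs w.re, sq_abs w.im]
      have hpos : 0 < Real.sqrt |w.re| * Real.sqrt |w.im| :=
        mul_pos (Real.sqrt_pos.2 (abs_pos.2 hw1)) (Real.sqrt_pos.2 (abs_pos.2 hw2))
      calc (ENNReal.ofReal (‖w‖))⁻¹
          ≤ (ENNReal.ofReal (Real.sqrt |w.re| * Real.sqrt |w.im|))⁻¹ :=
            ENNReal.inv_le_inv' (ENNReal.ofReal_le_ofReal hkey)
        _ = ENNReal.ofReal ((Real.sqrt |w.re| * Real.sqrt |w.im|)⁻¹) :=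
            (ENNReal.ofReal_inv_of_pos hpos).symm
        _ = ENNReal.ofReal ((Real.sqrt |w.re|)⁻¹ * (Real.sqrt |w.im|)⁻¹) := by
            rw [mul_inv]
        _ = ENNReal.ofReal ((Real.sqrt |w.re|)⁻¹) *
              ENNReal.ofReal ((Real.sqrt |w.im|)⁻¹) :=
            ENNReal.ofReal_mul (by positivity)
        _ = Fk w.re * Fk w.im := by
            rw [Fk, Fk, Set.indicator_of_mem hre1, Set.indicator_of_mem him1]
    · rw [Set.indicator_of_notMem hw]
      exact zero_le
  have hmeas : Measurable (fun p : ℝ × ℝ => Fk p.1 * Fk p.2) :=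
    (Fk_meas.comp measurable_fst).mul (Fk_meas.comp measurable_snd)
  calc ∫⁻ w : ℂ, (Metric.ball (0:ℂ) 1).indicator
        (fun w => (ENNReal.ofReal (‖w‖))⁻¹) w
      ≤ ∫⁻ w : ℂ, Fk w.re * Fk w.im := lintegral_mono_ae hb
    _ = ∫⁻ p : ℝ × ℝ, Fk p.1 * Fk p.2 := by
        rw [← Complex.volume_preserving_equiv_real_prod.lintegral_comp hmeas]
        rfl
    _ = (∫⁻ x : ℝ, Fk x) * ∫⁻ x : ℝ, Fk x :=
        lintegral_prod_mul Fk_meas.aemeasurable Fk_meas.aemeasurable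
    _ < ⊤ := ENNReal.mul_lt_top Fk_fin Fk_fin

end

/-- estimate (11.4): `∫_ℂ |ζ|/((|ζ|²+1)²|ζ−λ|) ≤ n₁` uniformly in `λ`. -/
theorem stmt_14 :
    ∃ n₁ : ℝ, 0 < n₁ ∧
      ∀ l : ℂ,
        ∫⁻ ζ : ℂ, ENNReal.ofReal (‖ζ‖) /
            (ENNReal.ofReal ((‖ζ‖ ^ 2 + 1) ^ 2) *
              ENNReal.ofReal (‖ζ - l‖))
          ≤ ENNReal.ofReal n₁ := by
  classical
  set A : ℝ≥0∞ := ∫⁻ w : ℂ, (Metric.ball (0:ℂ) 1).indicator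
      (fun w => (ENNReal.ofReal (‖w‖))⁻¹) w with hA
  -- tail integrand
  have hint : Integrable (fun w : ℂ => 4 * (1 + ‖w‖) ^ (-(3:ℝ))) volume := by
    have h2 : ((Module.finrank ℝ ℂ : ℝ)) < 3 := by
      rw [Complex.finrank_real_complex]; norm_num
    exact (integrable_one_add_norm h2).const_mul 4
  set B : ℝ≥0∞ := ∫⁻ w : ℂ, ENNReal.ofReal (4 * (1 + ‖w‖) ^ (-(3:ℝ))) with hB
  have hBfin : B < ⊤ := by
    rw [hB, ← ofReal_integral_eq_lintegral_ofReal hint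
      (Filter.Eventually.of_forall fun w => by positivity)]
    exact ENNReal.ofReal_lt_top
  have hABfin : A + B ≠ ⊤ := by
    exact (ENNReal.add_lt_top.2 ⟨aux_A, hBfin⟩).ne
  refine ⟨(A + B).toReal + 1, by positivity, fun l => ?_⟩
  -- pointwise bound
  have hpt : ∀ ζ : ℂ, ENNReal.ofReal (‖ζ‖) /
      (ENNReal.ofReal ((‖ζ‖ ^ 2 + 1) ^ 2) *
        ENNReal.ofReal (‖ζ - l‖))
      ≤ (Metric.ball l 1).indicator
          (fun ζ => (ENNReal.ofReal (‖ζ - l‖))⁻¹) ζ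
        + ENNReal.ofReal (4 * (1 + ‖ζ‖) ^ (-(3:ℝ))) := by
    intro ζ
    set a : ℝ := ‖ζ‖
    set b : ℝ := (‖ζ‖ ^ 2 + 1) ^ 2 with hbdef
    set c : ℝ := ‖ζ - l‖
    have ha0 : 0 ≤ a := norm_nonneg ζ
    have hb1 : 1 ≤ b := by
      rw [hbdef]
      nlinarith [sq_nonneg (‖ζ‖), sq_nonneg (‖ζ‖ ^ 2 + 1)]
    have hbne0 : ENNReal.ofReal b ≠ 0 := by
      simp only [ne_eq, ENNReal.ofReal_eq_zero, not_le]
      linarith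
    have hbnetop : ENNReal.ofReal b ≠ ⊤ := ENNReal.ofReal_ne_top
    have hmulinv : (ENNReal.ofReal b * ENNReal.ofReal c)⁻¹
        = (ENNReal.ofReal b)⁻¹ * (ENNReal.ofReal c)⁻¹ :=
      ENNReal.mul_inv (Or.inl hbne0) (Or.inl hbnetop)
    rw [div_eq_mul_inv, hmulinv, ← mul_assoc]
    by_cases hζ : ζ ∈ Metric.ball l 1
    · rw [Set.indicator_of_mem hζ]
      have hab : a ≤ b := by
        rw [hbdef]
        nlinarith [sq_nonneg (‖ζ‖ - 1), sq_nonneg (‖ζ‖),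
          sq_nonneg (‖ζ‖ ^ 2 + 1 - 1)]
      have h1 : ENNReal.ofReal a * (ENNReal.ofReal b)⁻¹ ≤ 1 := by
        calc ENNReal.ofReal a * (ENNReal.ofReal b)⁻¹
            ≤ ENNReal.ofReal b * (ENNReal.ofReal b)⁻¹ :=
              mul_le_mul_left (ENNReal.ofReal_le_ofReal hab) _
          _ = 1 := ENNReal.mul_inv_cancel hbne0 hbnetop
      calc ENNReal.ofReal a * (ENNReal.ofReal b)⁻¹ * (ENNReal.ofReal c)⁻¹
          ≤ 1 * (ENNReal.ofReal c)⁻¹ := mul_le_mul_left h1 _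
        _ = (ENNReal.ofReal c)⁻¹ := one_mul _
        _ ≤ _ := le_self_add
    · rw [Set.indicator_of_notMem hζ, zero_add]
      have hc1 : 1 ≤ c := by
        rw [Metric.mem_ball, not_lt, Complex.dist_eq] at hζ
        exact hζ
      have hcinv : (ENNReal.ofReal c)⁻¹ ≤ 1 :=
        ENNReal.inv_le_one.2 (ENNReal.one_le_ofReal.2 hc1)
      have hreal : a / b ≤ 4 * (1 + ‖ζ‖) ^ (-(3:ℝ)) := by
        have hnorm : ‖ζ‖ = ‖ζ‖ := rfl
        rw [hnorm]
        set t : ℝ := ‖ζ‖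
        have ht : 0 ≤ t := norm_nonneg ζ
        have hrw : (1 + t) ^ (-(3:ℝ)) = ((1 + t) ^ (3:ℕ))⁻¹ := by
          rw [Real.rpow_neg (by linarith), ← Real.rpow_natCast (1 + t) 3]
          norm_num
        rw [hrw, hbdef]
        rw [div_le_iff₀ (by positivity)]
        have h3 : (0:ℝ) < (1 + t) ^ (3:ℕ) := by positivity
        rw [mul_comm (4:ℝ) _, inv_mul_eq_div, div_mul_eq_mul_div, le_div_iff₀ h3]
        ring_nf
        nlinarith [sq_nonneg (t - 1), sq_nonneg t, sq_nonneg (t*t - t), ht,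
          sq_nonneg (t*t - 1), sq_nonneg (t*t + 1)]
      calc ENNReal.ofReal a * (ENNReal.ofReal b)⁻¹ * (ENNReal.ofReal c)⁻¹
          ≤ ENNReal.ofReal a * (ENNReal.ofReal b)⁻¹ * 1 := mul_le_mul_right hcinv _
        _ = ENNReal.ofReal a / ENNReal.ofReal b := by rw [mul_one, div_eq_mul_inv]
        _ = ENNReal.ofReal (a / b) := (ENNReal.ofReal_div_of_pos (by linarith)).symm
        _ ≤ ENNReal.ofReal (4 * (1 + ‖ζ‖) ^ (-(3:ℝ))) := ENNReal.ofReal_le_ofReal hreal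
  have hG1meas : Measurable (fun ζ : ℂ =>
      (Metric.ball l 1).indicator (fun ζ => (ENNReal.ofReal (‖ζ - l‖))⁻¹) ζ) := by
    apply Measurable.indicator _ measurableSet_ball
    apply Measurable.inv
    apply ENNReal.measurable_ofReal.comp
    exact (continuous_norm.comp (continuous_id.sub continuous_const)).measurable
  have hkmeas : Measurable (fun w : ℂ => (Metric.ball (0:ℂ) 1).indicator
      (fun w => (ENNReal.ofReal (‖w‖))⁻¹) w) := by
    apply Measurable.indicator _ measurableSet_ball
    exact (ENNReal.measurable_ofReal.comp continuous_norm.measurable).inv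
  have hG1 : ∫⁻ ζ : ℂ, (Metric.ball l 1).indicator
      (fun ζ => (ENNReal.ofReal (‖ζ - l‖))⁻¹) ζ = A := by
    have hfun : ∀ ζ : ℂ, (Metric.ball l 1).indicator
        (fun ζ => (ENNReal.ofReal (‖ζ - l‖))⁻¹) ζ
        = (Metric.ball (0:ℂ) 1).indicator
            (fun w => (ENNReal.ofReal (‖w‖))⁻¹) (ζ - l) := by
      intro ζ
      by_cases hζ : ζ ∈ Metric.ball l 1
      · rw [Set.indicator_of_mem hζ, Set.indicator_of_mem]
        rw [Metric.mem_ball, Complex.dist_eq, sub_zero]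
        rw [Metric.mem_ball, Complex.dist_eq] at hζ
        exact hζ
      · rw [Set.indicator_of_notMem hζ, Set.indicator_of_notMem]
        rw [Metric.mem_ball, Complex.dist_eq, sub_zero]
        rw [Metric.mem_ball, Complex.dist_eq] at hζ
        exact hζ
    simp_rw [hfun]
    exact (measurePreserving_sub_right volume l).lintegral_comp hkmeas
  calc ∫⁻ ζ : ℂ, ENNReal.ofReal (‖ζ‖) /
        (ENNReal.ofReal ((‖ζ‖ ^ 2 + 1) ^ 2) *
          ENNReal.ofReal (‖ζ - l‖))
      ≤ ∫⁻ ζ : ℂ, ((Metric.ball l 1).indicator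
          (fun ζ => (ENNReal.ofReal (‖ζ - l‖))⁻¹) ζ
        + ENNReal.ofReal (4 * (1 + ‖ζ‖) ^ (-(3:ℝ)))) := lintegral_mono hpt
    _ = (∫⁻ ζ : ℂ, (Metric.ball l 1).indicator
          (fun ζ => (ENNReal.ofReal (‖ζ - l‖))⁻¹) ζ) + B := by
        rw [hB]
        exact lintegral_add_left hG1meas _
    _ = A + B := by rw [hG1]
    _ ≤ ENNReal.ofReal ((A + B).toReal + 1) := by
        rw [← ENNReal.ofReal_toReal hABfin]
        apply ENNReal.ofReal_le_ofReal
        simp [ENNReal.toReal_ofReal ENNReal.toReal_nonneg]
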